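/- Let N ≥ 1 and let x_1, …, x_{N+1} ∈ ℝ^N be affinely independent. Suppose y and y* both lie in the open convex hull co{x_1,…,x_{N+1}} and y ≠ y*. Then there exist indices i and j such that ‖x_i − y‖ < ‖x_i − y*‖ and ‖x_j − y*‖ < ‖x_j − y‖; that is, some sensor is strictly closer to y than to y*, and some sensor is strictly closer to y* than to y. -/

import Mathlib

open Metric

private lemma exists_inner_gt {E : Type*} [NormedAddCommGroup E] [InnerProductSpace ℝ E]
    {n : ℕ} (x : Fin n → E) (v m : E) (hv : v ≠ 0)
    (hm : m ∈ interior (convexHull ℝ (Set.range x))) :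
    ∃ i, (inner ℝ v m : ℝ) < inner ℝ v (x i) := by
  by_contra h
  push_neg at h
  obtain ⟨ε, hε, hball⟩ := Metric.isOpen_iff.1 isOpen_interior m hm
  have hball' : Metric.ball m ε ⊆ convexHull ℝ (Set.range x) :=
    hball.trans interior_subset
  have hvn : (0:ℝ) < ‖v‖ := norm_pos_iff.2 hv
  set c : ℝ := ε / (2 * ‖v‖) with hc
  have hcpos : 0 < c := by positivity
  have hp : m + c • v ∈ Metric.ball m ε := by
    rw [Metric.mem_ball, dist_eq_norm]
    have : m + c • v - m = c • v := by abel
    rw [this, norm_smul, Real.norm_eq_abs, abs_of_pos hcpos, hc]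
    rw [div_mul_eq_mul_div, mul_comm 2 ‖v‖, ← div_div, mul_div_assoc,
      div_self (ne_of_gt hvn), mul_one]
    linarith
  have hpmem := hball' hp
  obtain ⟨ι, _, w, z, hw₀, hw₁, hz, hx⟩ := mem_convexHull_iff_exists_fintype.1 hpmem
  have hle : (inner ℝ v (m + c • v) : ℝ) ≤ inner ℝ v m := by
    rw [← hx, inner_sum]
    calc (∑ i, (inner ℝ v (w i • z i) : ℝ))
        = ∑ i, w i * inner ℝ v (z i) := by
          simp [real_inner_smul_right]
      _ ≤ ∑ i, w i * inner ℝ v m := by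
          refine Finset.sum_le_sum fun i _ => ?_
          obtain ⟨j, hj⟩ := hz i
          exact mul_le_mul_of_nonneg_left (hj ▸ h j) (hw₀ i)
      _ = inner ℝ v m := by rw [← Finset.sum_mul, hw₁, one_mul]
  rw [inner_add_right, real_inner_smul_right, real_inner_self_eq_norm_sq] at hle
  nlinarith [mul_pos hcpos (pow_pos hvn 2)]

/-- Theorem 2: if `y` and `ystar` are distinct points of the open convex hull
(interior of the convex hull) of `N + 1` affinely independent sensors in `ℝ^N`,
then some sensor is strictly closer to `y` than to `ystar`, and some sensor is
strictly closer to `ystar` than to `y`. -/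
theorem exists_closer_sensor_both_sides {N : ℕ} (hN : 1 ≤ N)
    (x : Fin (N + 1) → EuclideanSpace ℝ (Fin N))
    (hx : AffineIndependent ℝ x)
    (y ystar : EuclideanSpace ℝ (Fin N))
    (hy : y ∈ interior (convexHull ℝ (Set.range x)))
    (hystar : ystar ∈ interior (convexHull ℝ (Set.range x)))
    (hne : y ≠ ystar) :
    (∃ i, ‖x i - y‖ < ‖x i - ystar‖) ∧ (∃ j, ‖x j - ystar‖ < ‖x j - y‖) := by
  set v : EuclideanSpace ℝ (Fin N) := y - ystar with hv
  have hvne : v ≠ 0 := sub_ne_zero.2 hne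
  set m : EuclideanSpace ℝ (Fin N) := (1/2 : ℝ) • y + (1/2 : ℝ) • ystar with hmdef
  have hconv : Convex ℝ (interior (convexHull ℝ (Set.range x))) :=
    (convex_convexHull ℝ _).interior
  have hm : m ∈ interior (convexHull ℝ (Set.range x)) :=
    hconv hy hystar (by norm_num) (by norm_num) (by norm_num)
  have key : ∀ a : EuclideanSpace ℝ (Fin N),
      (inner ℝ v m : ℝ) < inner ℝ v a → ‖a - y‖ < ‖a - ystar‖ := by
    intro a hi
    refine lt_of_pow_lt_pow_left₀ 2 (norm_nonneg _) ?_
    rw [← real_inner_self_eq_norm_sq, ← real_inner_self_eq_norm_sq]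
    rw [hmdef, hv] at hi
    simp only [inner_add_right, real_inner_smul_right, inner_sub_left,
      inner_sub_right] at hi ⊢
    have c1 := real_inner_comm y ystar
    have c2 := real_inner_comm y a
    have c3 := real_inner_comm ystar a
    nlinarith
  have key' : ∀ a : EuclideanSpace ℝ (Fin N),
      (inner ℝ (-v) m : ℝ) < inner ℝ (-v) a → ‖a - ystar‖ < ‖a - y‖ := by
    intro a hi
    refine lt_of_pow_lt_pow_left₀ 2 (norm_nonneg _) ?_
    rw [← real_inner_self_eq_norm_sq, ← real_inner_self_eq_norm_sq]
    rw [hmdef, hv] at hi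
    simp only [inner_add_right, real_inner_smul_right, inner_sub_left,
      inner_sub_right, inner_neg_left] at hi ⊢
    have c1 := real_inner_comm y ystar
    have c2 := real_inner_comm y a
    have c3 := real_inner_comm ystar a
    nlinarith
  obtain ⟨i, hi⟩ := exists_inner_gt x v m hvne hm
  obtain ⟨j, hj⟩ := exists_inner_gt x (-v) m (neg_ne_zero.2 hvne) hm
  exact ⟨⟨i, key _ hi⟩, ⟨j, key' _ hj⟩⟩
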